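/- Let (X_i), (Y_i), (Z_i) be ℕ-indexed diagrams of topological spaces whose transition maps are closed embeddings, with compatible maps f_i : X_i → Z_i and g_i : Y_i → Z_i. If each X_i and Y_i is locally compact Hausdorff and each Z_i is Hausdorff, then the natural map colim_i (X_i ×_{Z_i} Y_i) → (colim_i X_i) ×_{colim_i Z_i} (colim_i Y_i) is a homeomorphism. -/
import Mathlib


open Topology

universe u

/-- The relation generating the sequential colimit: a point of `X n` is
identified with its image in `X (n+1)`. -/
def SeqRel (X : ℕ → Type u) (ι : ∀ n, X n → X (n + 1)) :
    (Σ n, X n) → (Σ n, X n) → Prop :=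
  fun a b => b = ⟨a.1 + 1, ι a.1 a.2⟩

/-- The sequential colimit of an `ℕ`-indexed system of types. -/
def SeqColim (X : ℕ → Type u) (ι : ∀ n, X n → X (n + 1)) : Type u :=
  Quot (SeqRel X ι)

/-- The canonical map from the `n`-th stage to the sequential colimit. -/
def SeqColim.mk (X : ℕ → Type u) (ι : ∀ n, X n → X (n + 1)) (n : ℕ) (x : X n) :
    SeqColim X ι :=
  Quot.mk _ ⟨n, x⟩

/-- The sequential colimit carries the final topology with respect to the maps
from the stages. -/
instance seqColimTopology (X : ℕ → Type u) (ι : ∀ n, X n → X (n + 1))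
    [∀ n, TopologicalSpace (X n)] : TopologicalSpace (SeqColim X ι) :=
  ⨆ n, TopologicalSpace.coinduced (SeqColim.mk X ι n) inferInstance

theorem SeqColim.mk_succ {X : ℕ → Type u} (ι : ∀ n, X n → X (n + 1)) (n : ℕ) (x : X n) :
    SeqColim.mk X ι (n + 1) (ι n x) = SeqColim.mk X ι n x :=
  (Quot.sound (r := SeqRel X ι) (a := ⟨n, x⟩) (b := ⟨n + 1, ι n x⟩) rfl).symm

/-- The universal map out of a sequential colimit. -/
def SeqColim.desc {X : ℕ → Type u} {ι : ∀ n, X n → X (n + 1)} {C : Sort*}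
    (h : ∀ n, X n → C) (compat : ∀ n x, h (n + 1) (ι n x) = h n x) :
    SeqColim X ι → C :=
  Quot.lift (fun a => h a.1 a.2) (by
    intro a b hb
    have hb' : b = ⟨a.1 + 1, ι a.1 a.2⟩ := hb
    subst hb'
    exact (compat a.1 a.2).symm)

/-- The topological fiber product of `f : X → Z` and `g : Y → Z`. -/
abbrev FibProd {X Y Z : Type u} (f : X → Z) (g : Y → Z) : Type u :=
  {p : X × Y // f p.1 = g p.2}

/-- The transition maps of the `ℕ`-indexed system of fiber products. -/
def fibTrans {X Y Z : ℕ → Type u}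
    (ιX : ∀ n, X n → X (n + 1)) (ιY : ∀ n, Y n → Y (n + 1)) (ιZ : ∀ n, Z n → Z (n + 1))
    (f : ∀ n, X n → Z n) (g : ∀ n, Y n → Z n)
    (hf : ∀ n x, f (n + 1) (ιX n x) = ιZ n (f n x))
    (hg : ∀ n y, g (n + 1) (ιY n y) = ιZ n (g n y)) (n : ℕ) :
    FibProd (f n) (g n) → FibProd (f (n + 1)) (g (n + 1)) :=
  fun p => ⟨(ιX n p.1.1, ιY n p.1.2), by rw [hf, hg, p.2]⟩

/-- The map induced on sequential colimits by a compatible family of maps. -/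
def colimMap {X Z : ℕ → Type u} (ιX : ∀ n, X n → X (n + 1)) (ιZ : ∀ n, Z n → Z (n + 1))
    (f : ∀ n, X n → Z n) (hf : ∀ n x, f (n + 1) (ιX n x) = ιZ n (f n x)) :
    SeqColim X ιX → SeqColim Z ιZ :=
  SeqColim.desc (fun n x => SeqColim.mk Z ιZ n (f n x))
    (fun n x => by
      show SeqColim.mk Z ιZ (n + 1) (f (n + 1) (ιX n x)) = SeqColim.mk Z ιZ n (f n x)
      rw [hf n x]; exact SeqColim.mk_succ ιZ n (f n x))

/-- The natural comparison map
`colim_i (X_i ×_{Z_i} Y_i) → (colim_i X_i) ×_{colim_i Z_i} (colim_i Y_i)`. -/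
def comparisonMap {X Y Z : ℕ → Type u}
    (ιX : ∀ n, X n → X (n + 1)) (ιY : ∀ n, Y n → Y (n + 1)) (ιZ : ∀ n, Z n → Z (n + 1))
    (f : ∀ n, X n → Z n) (g : ∀ n, Y n → Z n)
    (hf : ∀ n x, f (n + 1) (ιX n x) = ιZ n (f n x))
    (hg : ∀ n y, g (n + 1) (ιY n y) = ιZ n (g n y)) :
    SeqColim (fun n => FibProd (f n) (g n)) (fibTrans ιX ιY ιZ f g hf hg) →
      FibProd (colimMap ιX ιZ f hf) (colimMap ιY ιZ g hg) :=
  SeqColim.desc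
    (fun n p =>
      ⟨(SeqColim.mk X ιX n p.1.1, SeqColim.mk Y ιY n p.1.2), by
        show SeqColim.mk Z ιZ n (f n p.1.1) = SeqColim.mk Z ιZ n (g n p.1.2)
        rw [p.2]⟩)
    (fun n p => by
      apply Subtype.ext
      show (SeqColim.mk X ιX (n + 1) (ιX n p.1.1), SeqColim.mk Y ιY (n + 1) (ιY n p.1.2)) =
        (SeqColim.mk X ιX n p.1.1, SeqColim.mk Y ιY n p.1.2)
      rw [SeqColim.mk_succ, SeqColim.mk_succ])


universe v

namespace HarpazAux

variable {X : ℕ → Type u}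

/-- Iterated transition map of an `ℕ`-indexed system. -/
def lead (ι : ∀ n, X n → X (n + 1)) {n m : ℕ} (h : n ≤ m) (x : X n) : X m :=
  @Nat.leRecOn (fun k => X k) n m h (fun {k} => ι k) x

variable {ι : ∀ n, X n → X (n + 1)}

lemma lead_self {n : ℕ} (x : X n) : lead ι (le_refl n) x = x := Nat.leRecOn_self x

lemma lead_succ {n m : ℕ} (h : n ≤ m) {h2 : n ≤ m + 1} (x : X n) :
    lead ι h2 x = ι m (lead ι h x) := Nat.leRecOn_succ h x

lemma lead_trans {n m k : ℕ} (h1 : n ≤ m) (h2 : m ≤ k) {h3 : n ≤ k} (x : X n) :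
    lead ι h2 (lead ι h1 x) = lead ι h3 x := (Nat.leRecOn_trans h1 h2 x).symm

lemma continuous_lead [∀ n, TopologicalSpace (X n)] (hc : ∀ n, Continuous (ι n))
    {n m : ℕ} (h : n ≤ m) : Continuous (lead ι h : X n → X m) := by
  induction m, h using Nat.le_induction with
  | base =>
    have : (lead ι (le_refl n) : X n → X n) = id := funext fun x => lead_self x
    rw [this]; exact continuous_id
  | succ m hm ih =>
    have : (lead ι (by omega : n ≤ m + 1) : X n → X (m+1)) = ι m ∘ lead ι hm :=
      funext fun x => lead_succ hm x
    rw [this]; exact (hc m).comp ih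

lemma injective_lead (hinj : ∀ n, Function.Injective (ι n)) {n m : ℕ} (h : n ≤ m) :
    Function.Injective (lead ι h : X n → X m) :=
  fun a b hab => Nat.leRecOn_injective h (fun {k} => ι k) hinj hab

lemma mk_lead {n m : ℕ} (h : n ≤ m) (x : X n) :
    SeqColim.mk X ι m (lead ι h x) = SeqColim.mk X ι n x := by
  induction m, h using Nat.le_induction with
  | base => rw [lead_self]
  | succ m hm ih =>
    rw [lead_succ hm, SeqColim.mk_succ]; exact ih

lemma exists_lead_eq_of_mk_eq {n m : ℕ} {x : X n} {y : X m}
    (hxy : SeqColim.mk X ι n x = SeqColim.mk X ι m y) :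
    ∃ k, ∃ (h1 : n ≤ k) (h2 : m ≤ k), lead ι h1 x = lead ι h2 y := by
  have H : Relation.EqvGen (SeqRel X ι) ⟨n, x⟩ ⟨m, y⟩ := Quot.eq.mp hxy
  suffices h : ∀ a b : (Σ n, X n), Relation.EqvGen (SeqRel X ι) a b →
      ∃ k, ∃ (h1 : a.1 ≤ k) (h2 : b.1 ≤ k), lead ι h1 a.2 = lead ι h2 b.2 by
    exact h ⟨n, x⟩ ⟨m, y⟩ H
  intro a b H
  induction H with
  | rel a b hab =>
    subst hab
    exact ⟨a.1 + 1, Nat.le_succ _, le_refl _, by rw [lead_self, lead_succ (le_refl a.1), lead_self]⟩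
  | refl a => exact ⟨a.1, le_refl _, le_refl _, rfl⟩
  | symm a b _ ih =>
    obtain ⟨k, h1, h2, e⟩ := ih
    exact ⟨k, h2, h1, e.symm⟩
  | trans a b c _ _ ih1 ih2 =>
    obtain ⟨k, h1, h2, e1⟩ := ih1
    obtain ⟨k', h1', h2', e2⟩ := ih2
    refine ⟨max k k', le_trans h1 (le_max_left _ _), le_trans h2' (le_max_right _ _), ?_⟩
    calc lead ι (le_trans h1 (le_max_left k k')) a.2
        = lead ι (le_max_left k k') (lead ι h1 a.2) := (lead_trans h1 (le_max_left k k') a.2).symm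
      _ = lead ι (le_max_left k k') (lead ι h2 b.2) := by rw [e1]
      _ = lead ι (le_trans h2 (le_max_left k k')) b.2 := lead_trans h2 (le_max_left k k') b.2
      _ = lead ι (le_max_right k k') (lead ι h1' b.2) := (lead_trans h1' (le_max_right k k') b.2).symm
      _ = lead ι (le_max_right k k') (lead ι h2' c.2) := by rw [e2]
      _ = lead ι (le_trans h2' (le_max_right k k')) c.2 := lead_trans h2' (le_max_right k k') c.2

lemma continuous_mk [∀ n, TopologicalSpace (X n)] (n : ℕ) :
    Continuous (SeqColim.mk X ι n) :=
  continuous_iff_coinduced_le.mpr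
    (le_iSup (fun n => TopologicalSpace.coinduced (SeqColim.mk X ι n) inferInstance) n)

lemma isOpen_colim_iff [∀ n, TopologicalSpace (X n)] {s : Set (SeqColim X ι)} :
    IsOpen s ↔ ∀ n, IsOpen (SeqColim.mk X ι n ⁻¹' s) := by
  simp only [← isOpen_coinduced]
  exact isOpen_iSup_iff

lemma continuous_desc [∀ n, TopologicalSpace (X n)] {C : Type v} [TopologicalSpace C]
    {h : ∀ n, X n → C} {compat : ∀ n x, h (n + 1) (ι n x) = h n x}
    (hc : ∀ n, Continuous (h n)) :
    Continuous (SeqColim.desc h compat) :=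
  continuous_iSup_dom.mpr fun n => continuous_coinduced_dom.mpr (hc n)

/-- map commutation with `lead` -/
lemma lead_comm {X Z : ℕ → Type u} {ιX : ∀ n, X n → X (n + 1)} {ιZ : ∀ n, Z n → Z (n + 1)}
    (f : ∀ n, X n → Z n) (hf : ∀ n x, f (n + 1) (ιX n x) = ιZ n (f n x))
    {n m : ℕ} (h : n ≤ m) (x : X n) :
    f m (lead ιX h x) = lead ιZ h (f n x) := by
  induction m, h using Nat.le_induction with
  | base => rw [lead_self, lead_self]
  | succ m hm ih =>
    rw [lead_succ hm, lead_succ hm (x := f n x), hf, ih]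


/-- Components of `lead` for the fiber-product system. -/
lemma lead_fib {X Y Z : ℕ → Type u}
    {ιX : ∀ n, X n → X (n + 1)} {ιY : ∀ n, Y n → Y (n + 1)} {ιZ : ∀ n, Z n → Z (n + 1)}
    {f : ∀ n, X n → Z n} {g : ∀ n, Y n → Z n}
    {hf : ∀ n x, f (n + 1) (ιX n x) = ιZ n (f n x)}
    {hg : ∀ n y, g (n + 1) (ιY n y) = ιZ n (g n y)}
    {n m : ℕ} (h : n ≤ m) (p : FibProd (f n) (g n)) :
    (lead (fibTrans ιX ιY ιZ f g hf hg) h p).val = (lead ιX h p.1.1, lead ιY h p.1.2) := by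
  induction m, h using Nat.le_induction with
  | base => rw [lead_self, lead_self, lead_self]
  | succ m hm ih =>
    rw [lead_succ hm, lead_succ hm (x := p.1.1), lead_succ hm (x := p.1.2)]
    show (ιX m (lead (fibTrans ιX ιY ιZ f g hf hg) hm p).val.1,
      ιY m (lead (fibTrans ιX ιY ιZ f g hf hg) hm p).val.2) = _
    rw [ih]

/-- The key local step using local compactness and the tube lemma. -/
lemma fib_step {A B C : Type u} [TopologicalSpace A] [TopologicalSpace B] [TopologicalSpace C]
    [LocallyCompactSpace A] [LocallyCompactSpace B] [T2Space C]
    {f : A → C} {g : B → C} (hf : Continuous f) (hg : Continuous g)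
    {R : Set (A × B)} (hR : IsOpen R) {K0 : Set A} {L0 : Set B}
    (hK0 : IsCompact K0) (hL0 : IsCompact L0)
    (hsub : ∀ a b, f a = g b → a ∈ K0 → b ∈ L0 → (a, b) ∈ R) :
    ∃ K L, IsCompact K ∧ IsCompact L ∧ K0 ⊆ interior K ∧ L0 ⊆ interior L ∧
      ∀ a b, f a = g b → a ∈ K → b ∈ L → (a, b) ∈ R := by
  have hW : IsClosed {p : A × B | f p.1 = g p.2} :=
    isClosed_eq (hf.comp continuous_fst) (hg.comp continuous_snd)
  have hF : IsOpen ({p : A × B | f p.1 = g p.2} \ R)ᶜ := (hW.sdiff hR).isOpen_compl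
  have hKL : K0 ×ˢ L0 ⊆ ({p : A × B | f p.1 = g p.2} \ R)ᶜ := by
    rintro ⟨a, b⟩ ⟨ha, hb⟩ ⟨hfg, hnR⟩
    exact hnR (hsub a b hfg ha hb)
  obtain ⟨u, v, hu, hv, hK0u, hL0v, huv⟩ := generalized_tube_lemma hK0 hL0 hF hKL
  obtain ⟨K, hKc, hK0K, hKu⟩ := exists_compact_between hK0 hu hK0u
  obtain ⟨L, hLc, hL0L, hLv⟩ := exists_compact_between hL0 hv hL0v
  refine ⟨K, L, hKc, hLc, hK0K, hL0L, fun a b hfg ha hb => ?_⟩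
  by_contra hnR
  exact huv (Set.mk_mem_prod (hKu ha) (hLv hb)) ⟨hfg, hnR⟩

/-- Dependent choice along `ℕ` with linking conditions. -/
lemma exists_chain {Q : ℕ → Type v} (base : Q 0)
    (link : ∀ j, Q j → Q (j + 1) → Prop)
    (step : ∀ j (s : Q j), ∃ t, link j s t) :
    ∃ c : ∀ j, Q j, c 0 = base ∧ ∀ j, link j (c j) (c (j + 1)) :=
  ⟨fun j => Nat.rec base (fun j s => (step j s).choose) j, rfl,
    fun j => (step j _).choose_spec⟩

/-- Propagation of membership along a telescope of compacta. -/
lemma lead_mem_tele {ι : ∀ n, X n → X (n + 1)} [∀ n, TopologicalSpace (X n)] {n : ℕ} {K : ∀ j, Set (X (n + j))}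
    (hlink : ∀ j, ∀ a ∈ K j, ι (n + j) a ∈ interior (K (j + 1)))
    {j j' : ℕ} (hj : j ≤ j') (h : n + j ≤ n + j') {a : X (n + j)} (ha : a ∈ K j) :
    lead ι h a ∈ K j' := by
  induction j', hj using Nat.le_induction with
  | base =>
    have : lead ι h a = a := lead_self a
    rwa [this]
  | succ j' hj ih =>
    have h1 : n + j ≤ n + j' := by omega
    have : lead ι h a = ι (n + j') (lead ι h1 a) := lead_succ h1 a
    rw [this]
    exact interior_subset (hlink j' _ (ih h1))

/-- The open "telescope" subset of the colimit. -/
lemma isOpen_tele {ι : ∀ n, X n → X (n + 1)} [∀ n, TopologicalSpace (X n)]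
    (hc : ∀ n, Continuous (ι n)) (n : ℕ) (K : ∀ j, Set (X (n + j)))
    (hlink : ∀ j, ∀ a ∈ K j, ι (n + j) a ∈ interior (K (j + 1))) :
    IsOpen {u : SeqColim X ι | ∃ j x', x' ∈ interior (K j) ∧ SeqColim.mk X ι (n + j) x' = u} := by
  rw [isOpen_colim_iff]
  intro r
  have hEq : SeqColim.mk X ι r ⁻¹'
      {u : SeqColim X ι | ∃ j x', x' ∈ interior (K j) ∧ SeqColim.mk X ι (n + j) x' = u}
      = ⋃ j, {x' : X r | ∃ h : r ≤ n + j, lead ι h x' ∈ interior (K j)} := by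
    ext x'
    simp only [Set.mem_preimage, Set.mem_iUnion, Set.mem_setOf_eq]
    constructor
    · rintro ⟨j, z, hz, hzx⟩
      obtain ⟨t, h1, h2, e⟩ := exists_lead_eq_of_mk_eq hzx
      obtain ⟨d, rfl⟩ : ∃ d, t = n + (j + d) := ⟨t - (n + j), by omega⟩
      refine ⟨j + d + 1, ⟨by omega, ?_⟩⟩
      have hm : lead ι (by omega : r ≤ n + (j + d + 1)) x'
          = ι (n + (j + d)) (lead ι h2 x') := lead_succ h2 x'
      rw [hm, ← e]
      exact hlink (j + d) _ (lead_mem_tele hlink (by omega) h1 (interior_subset hz))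
    · rintro ⟨j, h, hx⟩
      exact ⟨j, lead ι h x', hx, mk_lead h x'⟩
  rw [hEq]
  apply isOpen_iUnion
  intro j
  by_cases hr : r ≤ n + j
  · have : {x' : X r | ∃ h : r ≤ n + j, lead ι h x' ∈ interior (K j)}
        = lead ι hr ⁻¹' interior (K j) := by
      ext x'
      constructor
      · rintro ⟨h, hx⟩; exact hx
      · intro hx; exact ⟨hr, hx⟩
    rw [this]
    exact isOpen_interior.preimage (continuous_lead hc hr)
  · have : {x' : X r | ∃ h : r ≤ n + j, lead ι h x' ∈ interior (K j)} = ∅ := by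
      ext x'
      simp only [Set.mem_setOf_eq, Set.mem_empty_iff_false, iff_false]
      rintro ⟨h, -⟩
      exact hr h
    rw [this]
    exact isOpen_empty


/-- The type of stages of the compact telescope. -/
abbrev TeleQ {X Y Z : ℕ → Type u} [∀ n, TopologicalSpace (X n)] [∀ n, TopologicalSpace (Y n)]
    (f : ∀ n, X n → Z n) (g : ∀ n, Y n → Z n) (n : ℕ)
    (R : ∀ j, Set (X (n + j) × Y (n + j))) (j : ℕ) : Type u :=
  {KL : Set (X (n + j)) × Set (Y (n + j)) //
    IsCompact KL.1 ∧ IsCompact KL.2 ∧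
      ∀ a b, f (n + j) a = g (n + j) b → a ∈ KL.1 → b ∈ KL.2 → (a, b) ∈ R j}

/-- Construction of the compact telescope via local compactness. -/
lemma exists_compact_telescope {X Y Z : ℕ → Type u}
    [∀ n, TopologicalSpace (X n)] [∀ n, TopologicalSpace (Y n)] [∀ n, TopologicalSpace (Z n)]
    [∀ n, LocallyCompactSpace (X n)] [∀ n, LocallyCompactSpace (Y n)] [∀ n, T2Space (Z n)]
    {ιX : ∀ n, X n → X (n + 1)} {ιY : ∀ n, Y n → Y (n + 1)}
    (f : ∀ n, X n → Z n) (g : ∀ n, Y n → Z n)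
    (hfc : ∀ n, Continuous (f n)) (hgc : ∀ n, Continuous (g n))
    (hcX : ∀ n, Continuous (ιX n)) (hcY : ∀ n, Continuous (ιY n))
    (n : ℕ) (R : ∀ j, Set (X (n + j) × Y (n + j)))
    (hRopen : ∀ j, IsOpen (R j))
    (hRstep : ∀ j a b, f (n + j) a = g (n + j) b → (a, b) ∈ R j →
      (ιX (n + j) a, ιY (n + j) b) ∈ R (j + 1))
    (hdesc : ∀ j a b, f (n + (j + 1)) (ιX (n + j) a) = g (n + (j + 1)) (ιY (n + j) b) →
      f (n + j) a = g (n + j) b)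
    (x0 : X (n + 0)) (y0 : Y (n + 0)) (h0 : (x0, y0) ∈ R 0) :
    ∃ (K : ∀ j, Set (X (n + j))) (L : ∀ j, Set (Y (n + j))),
      x0 ∈ interior (K 0) ∧ y0 ∈ interior (L 0) ∧
      (∀ j, ∀ a ∈ K j, ιX (n + j) a ∈ interior (K (j + 1))) ∧
      (∀ j, ∀ b ∈ L j, ιY (n + j) b ∈ interior (L (j + 1))) ∧
      (∀ j a b, f (n + j) a = g (n + j) b → a ∈ K j → b ∈ L j → (a, b) ∈ R j) := by
  obtain ⟨K0, L0, hK0c, hL0c, hxint, hyint, hP0⟩ :=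
    fib_step (hfc (n + 0)) (hgc (n + 0)) (hRopen 0)
      (isCompact_singleton : IsCompact {x0}) (isCompact_singleton : IsCompact {y0})
      (fun a b hab ha hb => by
        rw [Set.mem_singleton_iff] at ha hb
        subst ha; subst hb
        exact h0)
  have hstep : ∀ j (s : TeleQ f g n R j), ∃ t : TeleQ f g n R (j + 1),
      (∀ a ∈ s.val.1, ιX (n + j) a ∈ interior t.val.1) ∧
      (∀ b ∈ s.val.2, ιY (n + j) b ∈ interior t.val.2) := by
    rintro j ⟨⟨Kj, Lj⟩, hKc, hLc, hPj⟩
    obtain ⟨K', L', hK'c, hL'c, hKint, hLint, hP'⟩ :=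
      fib_step (hfc (n + (j + 1))) (hgc (n + (j + 1))) (hRopen (j + 1))
        (hKc.image (hcX (n + j))) (hLc.image (hcY (n + j)))
        (fun a b hab ha hb => by
          obtain ⟨a0, ha0, rfl⟩ := ha
          obtain ⟨b0, hb0, rfl⟩ := hb
          have hab0 : f (n + j) a0 = g (n + j) b0 := hdesc j a0 b0 hab
          exact hRstep j a0 b0 hab0 (hPj a0 b0 hab0 ha0 hb0))
    exact ⟨⟨(K', L'), hK'c, hL'c, hP'⟩,
      fun a ha => hKint (Set.mem_image_of_mem _ ha),
      fun b hb => hLint (Set.mem_image_of_mem _ hb)⟩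
  obtain ⟨c, hc0, hlink⟩ :=
    exists_chain (⟨(K0, L0), hK0c, hL0c, hP0⟩ : TeleQ f g n R 0)
      (fun j (s : TeleQ f g n R j) (t : TeleQ f g n R (j + 1)) =>
        (∀ a ∈ s.val.1, ιX (n + j) a ∈ interior t.val.1) ∧
        (∀ b ∈ s.val.2, ιY (n + j) b ∈ interior t.val.2)) hstep
  refine ⟨fun j => (c j).val.1, fun j => (c j).val.2, ?_, ?_,
    fun j => (hlink j).1, fun j => (hlink j).2,
    fun j => (c j).property.2.2⟩
  · show x0 ∈ interior (c 0).val.1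
    rw [show (c 0).val.1 = K0 from congrArg (fun s : TeleQ f g n R 0 => s.val.1) hc0]
    exact hxint rfl
  · show y0 ∈ interior (c 0).val.2
    rw [show (c 0).val.2 = L0 from congrArg (fun s : TeleQ f g n R 0 => s.val.2) hc0]
    exact hyint rfl

end HarpazAux

open HarpazAux

/-- **Harpaz's lemma.** Let `(X_i)`, `(Y_i)`, `(Z_i)` be `ℕ`-indexed diagrams of
topological spaces whose transition maps are closed embeddings, with compatible
continuous maps `f_i : X_i → Z_i`, `g_i : Y_i → Z_i`. If each `X_i`, `Y_i` is
locally compact Hausdorff and each `Z_i` is Hausdorff, then the natural map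
`colim_i (X_i ×_{Z_i} Y_i) → (colim_i X_i) ×_{colim_i Z_i} (colim_i Y_i)`
is a homeomorphism. -/
theorem comparisonMap_isHomeomorph (X Y Z : ℕ → Type u)
    [∀ n, TopologicalSpace (X n)] [∀ n, TopologicalSpace (Y n)] [∀ n, TopologicalSpace (Z n)]
    (ιX : ∀ n, X n → X (n + 1)) (ιY : ∀ n, Y n → Y (n + 1)) (ιZ : ∀ n, Z n → Z (n + 1))
    (hιX : ∀ n, IsClosedEmbedding (ιX n)) (hιY : ∀ n, IsClosedEmbedding (ιY n))
    (hιZ : ∀ n, IsClosedEmbedding (ιZ n))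
    (f : ∀ n, X n → Z n) (g : ∀ n, Y n → Z n)
    (hfc : ∀ n, Continuous (f n)) (hgc : ∀ n, Continuous (g n))
    (hf : ∀ n x, f (n + 1) (ιX n x) = ιZ n (f n x))
    (hg : ∀ n y, g (n + 1) (ιY n y) = ιZ n (g n y))
    [∀ n, LocallyCompactSpace (X n)] [∀ n, T2Space (X n)]
    [∀ n, LocallyCompactSpace (Y n)] [∀ n, T2Space (Y n)]
    [∀ n, T2Space (Z n)] :
    IsHomeomorph (comparisonMap ιX ιY ιZ f g hf hg) := by
  classical
  have hcX : ∀ n, Continuous (ιX n) := fun n => (hιX n).continuous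
  have hcY : ∀ n, Continuous (ιY n) := fun n => (hιY n).continuous
  refine ⟨?_, ?_, ?_, ?_⟩
  · -- continuity
    exact continuous_desc fun n =>
      (((continuous_mk (ι := ιX) n).comp (continuous_fst.comp continuous_subtype_val)).prodMk
        ((continuous_mk (ι := ιY) n).comp (continuous_snd.comp continuous_subtype_val))).subtype_mk _
  · -- open map
    intro O hO
    rw [isOpen_iff_forall_mem_open]
    rintro q ⟨w, hwO, rfl⟩
    obtain ⟨⟨n, p⟩, rfl⟩ := Quot.exists_rep w
    have hstage : ∀ j, ∃ R : Set (X (n + j) × Y (n + j)), IsOpen R ∧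
        Subtype.val ⁻¹' R
          = SeqColim.mk (fun k => FibProd (f k) (g k)) (fibTrans ιX ιY ιZ f g hf hg) (n + j) ⁻¹' O := by
      intro j
      have hO' : IsOpen (SeqColim.mk (fun k => FibProd (f k) (g k))
          (fibTrans ιX ιY ιZ f g hf hg) (n + j) ⁻¹' O) :=
        hO.preimage (continuous_mk _)
      exact isOpen_induced_iff.mp hO'
    choose R hRopen hRspec using hstage
    have hRmem : ∀ j (p' : FibProd (f (n + j)) (g (n + j))),
        p'.val ∈ R j ↔
          SeqColim.mk (fun k => FibProd (f k) (g k)) (fibTrans ιX ιY ιZ f g hf hg) (n + j) p' ∈ O :=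
      fun j p' => Set.ext_iff.mp (hRspec j) p'
    have hp0 : p.val ∈ R 0 := (hRmem 0 p).mpr hwO
    obtain ⟨KK, LL, hxint, hyint, hlinkX', hlinkY', hPall⟩ :=
      exists_compact_telescope (ιX := ιX) (ιY := ιY) f g hfc hgc hcX hcY n R hRopen
        (fun j a0 b0 hab0 hmem => by
          have hmO : SeqColim.mk (fun k => FibProd (f k) (g k))
              (fibTrans ιX ιY ιZ f g hf hg) (n + j) ⟨(a0, b0), hab0⟩ ∈ O :=
            (hRmem j ⟨(a0, b0), hab0⟩).mp hmem
          have hmO' : SeqColim.mk (fun k => FibProd (f k) (g k))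
              (fibTrans ιX ιY ιZ f g hf hg) (n + j + 1)
              (fibTrans ιX ιY ιZ f g hf hg (n + j) ⟨(a0, b0), hab0⟩) ∈ O := by
            rw [SeqColim.mk_succ]; exact hmO
          exact (hRmem (j + 1) (fibTrans ιX ιY ιZ f g hf hg (n + j) ⟨(a0, b0), hab0⟩)).mpr hmO')
        (fun j a0 b0 hab => (hιZ (n + j)).injective (by rw [← hf, ← hg]; exact hab))
        p.val.1 p.val.2 (Set.mem_of_eq_of_mem Prod.mk.eta hp0)
    refine ⟨Subtype.val ⁻¹'
      ({u | ∃ j x', x' ∈ interior (KK j) ∧ SeqColim.mk X ιX (n + j) x' = u} ×ˢ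
       {v | ∃ j y', y' ∈ interior (LL j) ∧ SeqColim.mk Y ιY (n + j) y' = v}), ?_, ?_, ?_⟩
    · rintro ⟨⟨u, v⟩, huv⟩ ⟨hu, hv⟩
      obtain ⟨j, xu, hxu, rfl⟩ := hu
      obtain ⟨j', yv, hyv, rfl⟩ := hv
      have h3 : SeqColim.mk Z ιZ (n + j) (f (n + j) xu)
          = SeqColim.mk Z ιZ (n + j') (g (n + j') yv) := huv
      obtain ⟨t, h1, h2, e⟩ := exists_lead_eq_of_mk_eq h3
      obtain ⟨j3, rfl⟩ : ∃ j3, t = n + j3 := ⟨t - n, by omega⟩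
      have hx3 : lead ιX h1 xu ∈ KK j3 :=
        lead_mem_tele hlinkX' (by omega) h1 (interior_subset hxu)
      have hy3 : lead ιY h2 yv ∈ LL j3 :=
        lead_mem_tele hlinkY' (by omega) h2 (interior_subset hyv)
      have e3 : f (n + j3) (lead ιX h1 xu) = g (n + j3) (lead ιY h2 yv) := by
        rw [lead_comm f hf, lead_comm g hg]; exact e
      have hR3 : (lead ιX h1 xu, lead ιY h2 yv) ∈ R j3 :=
        hPall j3 _ _ e3 hx3 hy3
      refine ⟨SeqColim.mk (fun k => FibProd (f k) (g k)) (fibTrans ιX ιY ιZ f g hf hg) (n + j3)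
        ⟨(lead ιX h1 xu, lead ιY h2 yv), e3⟩, (hRmem j3 _).mp hR3, ?_⟩
      apply Subtype.ext
      show (SeqColim.mk X ιX (n + j3) (lead ιX h1 xu),
          SeqColim.mk Y ιY (n + j3) (lead ιY h2 yv))
        = (SeqColim.mk X ιX (n + j) xu, SeqColim.mk Y ιY (n + j') yv)
      rw [mk_lead, mk_lead]
    · exact ((isOpen_tele hcX n KK hlinkX').prod (isOpen_tele hcY n LL hlinkY')).preimage
        continuous_subtype_val
    · exact ⟨⟨0, p.val.1, hxint, rfl⟩, ⟨0, p.val.2, hyint, rfl⟩⟩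
  · -- injective
    intro a b hab
    obtain ⟨⟨n, p⟩, rfl⟩ := Quot.exists_rep a
    obtain ⟨⟨m, q⟩, rfl⟩ := Quot.exists_rep b
    have h1 : SeqColim.mk X ιX n p.val.1 = SeqColim.mk X ιX m q.val.1 :=
      congrArg (fun t => t.val.1) hab
    have h2 : SeqColim.mk Y ιY n p.val.2 = SeqColim.mk Y ιY m q.val.2 :=
      congrArg (fun t => t.val.2) hab
    obtain ⟨k1, hn1, hm1, e1⟩ := exists_lead_eq_of_mk_eq h1
    obtain ⟨k2, hn2, hm2, e2⟩ := exists_lead_eq_of_mk_eq h2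
    have hk1 : k1 ≤ max k1 k2 := le_max_left _ _
    have hk2 : k2 ≤ max k1 k2 := le_max_right _ _
    have hn : n ≤ max k1 k2 := le_trans hn1 hk1
    have hm : m ≤ max k1 k2 := le_trans hm1 hk1
    have eX : lead ιX hn p.val.1 = lead ιX hm q.val.1 := by
      rw [← lead_trans hn1 hk1 p.val.1, ← lead_trans hm1 hk1 q.val.1, e1]
    have eY : lead ιY hn p.val.2 = lead ιY hm q.val.2 := by
      rw [← lead_trans hn2 hk2 p.val.2, ← lead_trans hm2 hk2 q.val.2, e2]
    have eW : lead (fibTrans ιX ιY ιZ f g hf hg) hn p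
        = lead (fibTrans ιX ιY ιZ f g hf hg) hm q := by
      apply Subtype.ext
      rw [lead_fib hn p, lead_fib hm q, eX, eY]
    show SeqColim.mk (fun k => FibProd (f k) (g k)) (fibTrans ιX ιY ιZ f g hf hg) n p
      = SeqColim.mk (fun k => FibProd (f k) (g k)) (fibTrans ιX ιY ιZ f g hf hg) m q
    rw [← mk_lead (X := fun k => FibProd (f k) (g k)) (ι := fibTrans ιX ιY ιZ f g hf hg) hn p,
      ← mk_lead (X := fun k => FibProd (f k) (g k)) (ι := fibTrans ιX ιY ιZ f g hf hg) hm q, eW]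
  · -- surjective
    rintro ⟨⟨u, v⟩, huv⟩
    obtain ⟨⟨n, x⟩, rfl⟩ := Quot.exists_rep u
    obtain ⟨⟨m, y⟩, rfl⟩ := Quot.exists_rep v
    have h3 : SeqColim.mk Z ιZ n (f n x) = SeqColim.mk Z ιZ m (g m y) := huv
    obtain ⟨t, h1, h2, e⟩ := exists_lead_eq_of_mk_eq h3
    have e' : f t (lead ιX h1 x) = g t (lead ιY h2 y) := by
      rw [lead_comm f hf, lead_comm g hg]; exact e
    refine ⟨SeqColim.mk (fun k => FibProd (f k) (g k)) (fibTrans ιX ιY ιZ f g hf hg) t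
      ⟨(lead ιX h1 x, lead ιY h2 y), e'⟩, ?_⟩
    apply Subtype.ext
    show (SeqColim.mk X ιX t (lead ιX h1 x), SeqColim.mk Y ιY t (lead ιY h2 y))
      = (SeqColim.mk X ιX n x, SeqColim.mk Y ιY m y)
    rw [mk_lead, mk_lead]
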